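/- arXiv:1808.04773 — 7 statements merged into one kernel-verified Lean document; each statement's English description precedes it below -/
import Mathlib

section
/- Suppose d_k > 0 for every k = 1,…,K. Then the vector p̂ defined by p̂_k = [Σ_{l=1}^K (d_k²/d_l²)^{1/(m-1)}]^{-1} belongs to the probability simplex Δ_K, and f_d(p̂) ≤ f_d(p) for every p ∈ Δ_K; that is, p̂ is a global minimizer of f_d on Δ_K. -/
open Finset

/-- Tangent-line inequality for `x ↦ x ^ m`, `m > 1`, at a positive point `y`. -/
lemma tangent_line_rpow (m : ℝ) (hm : 1 < m) (x y : ℝ) (hx : 0 ≤ x) (hy : 0 < y) :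
    y ^ m + m * y ^ (m - 1) * (x - y) ≤ x ^ m := by
  have hs : -1 ≤ x / y - 1 := by
    have : 0 ≤ x / y := div_nonneg hx hy.le
    linarith
  have hb := one_add_mul_self_le_rpow_one_add hs hm.le
  rw [show (1 : ℝ) + (x / y - 1) = x / y by ring] at hb
  have hym : (0 : ℝ) < y ^ m := Real.rpow_pos_of_pos hy m
  have h2 : y ^ m * (1 + m * (x / y - 1)) ≤ y ^ m * (x / y) ^ m :=
    mul_le_mul_of_nonneg_left hb hym.le
  have h3 : y ^ m * (x / y) ^ m = x ^ m := by
    rw [Real.div_rpow hx hy.le]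
    field_simp
  have h4 : y ^ (m - 1) = y ^ m / y := Real.rpow_sub_one hy.ne' m
  have h5 : y ^ m * (1 + m * (x / y - 1)) = y ^ m + m * (y ^ m / y) * (x - y) := by
    field_simp
  rw [h3, h5] at h2
  rw [h4]
  exact h2

/-- For positive `d`, the vector `p̂` with
`p̂_k = [Σ_l (d_k²/d_l²)^{1/(m-1)}]⁻¹` lies in the probability simplex and globally
minimizes `f_d(p) = Σ_k p_k^m d_k²` on the simplex. -/
theorem phat_mem_simplex_and_isMinOn
    (K : ℕ) (hK : 1 ≤ K) (m : ℝ) (hm : 1 < m)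
    (d : Fin K → ℝ) (hd : ∀ k, 0 < d k)
    (phat : Fin K → ℝ)
    (hphat : ∀ k, phat k = (∑ l, ((d k ^ 2) / (d l ^ 2)) ^ ((1 : ℝ) / (m - 1)))⁻¹) :
    ((∀ k, 0 ≤ phat k ∧ phat k ≤ 1) ∧ ∑ k, phat k = 1) ∧
      ∀ p : Fin K → ℝ, ((∀ k, 0 ≤ p k ∧ p k ≤ 1) ∧ ∑ k, p k = 1) →
        ∑ k, phat k ^ m * d k ^ 2 ≤ ∑ k, p k ^ m * d k ^ 2 := by
  have hm1 : (0 : ℝ) < m - 1 := by linarith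
  set e : ℝ := 1 / (m - 1) with he
  have hdsq : ∀ k, (0 : ℝ) < d k ^ 2 := fun k => pow_pos (hd k) 2
  set b : Fin K → ℝ := fun k => (d k ^ 2) ^ e with hb
  have hbpos : ∀ k, 0 < b k := fun k => Real.rpow_pos_of_pos (hdsq k) e
  set T : ℝ := ∑ l, (b l)⁻¹ with hT
  have hTpos : 0 < T := by
    apply Finset.sum_pos (fun l _ => inv_pos.mpr (hbpos l))
    exact Finset.univ_nonempty_iff.mpr (Fin.pos_iff_nonempty.mp hK)
  -- rewrite phat
  have hphat' : ∀ k, phat k = (b k)⁻¹ / T := by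
    intro k
    rw [hphat k]
    have : ∀ l, ((d k ^ 2) / (d l ^ 2)) ^ e = b k * (b l)⁻¹ := by
      intro l
      rw [Real.div_rpow (hdsq k).le (hdsq l).le]
      rw [div_eq_mul_inv]
    have hsum2 : ∑ l, ((d k ^ 2) / (d l ^ 2)) ^ e = b k * T := by
      rw [hT, Finset.mul_sum]
      exact Finset.sum_congr rfl fun l _ => this l
    rw [hsum2, mul_inv, div_eq_mul_inv]
  have hphatpos : ∀ k, 0 < phat k := by
    intro k
    rw [hphat' k]
    exact div_pos (inv_pos.mpr (hbpos k)) hTpos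
  have hsum : ∑ k, phat k = 1 := by
    rw [Finset.sum_congr rfl fun k _ => hphat' k]
    rw [← Finset.sum_div, ← hT, div_self hTpos.ne']
  have hle1 : ∀ k, phat k ≤ 1 := by
    intro k
    rw [hphat' k, div_le_one hTpos]
    exact Finset.single_le_sum (f := fun l => (b l)⁻¹)
      (fun l _ => (inv_pos.mpr (hbpos l)).le) (Finset.mem_univ k)
  refine ⟨⟨fun k => ⟨(hphatpos k).le, hle1 k⟩, hsum⟩, ?_⟩
  set c : ℝ := (T ^ (m - 1))⁻¹ with hc
  have hconst : ∀ k, d k ^ 2 * phat k ^ (m - 1) = c := by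
    intro k
    have hbm : b k ^ (m - 1) = d k ^ 2 := by
      simp only [hb]
      rw [← Real.rpow_mul (hdsq k).le]
      rw [show e * (m - 1) = 1 by rw [he]; field_simp]
      exact Real.rpow_one _
    have hT2 : 0 < T ^ (m - 1) := Real.rpow_pos_of_pos hTpos _
    rw [hphat' k, Real.div_rpow (inv_nonneg.mpr (hbpos k).le) hTpos.le,
      Real.inv_rpow (hbpos k).le, hbm, hc]
    field_simp
    exact div_self (hd k).ne'
  intro p hp
  obtain ⟨hp01, hpsum⟩ := hp
  have h1 : ∀ k, phat k ^ m * d k ^ 2 + m * c * (p k - phat k) ≤ p k ^ m * d k ^ 2 := by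
    intro k
    have ht := tangent_line_rpow m hm (p k) (phat k) (hp01 k).1 (hphatpos k)
    have h2 : (phat k ^ m + m * phat k ^ (m - 1) * (p k - phat k)) * d k ^ 2
        ≤ p k ^ m * d k ^ 2 := mul_le_mul_of_nonneg_right ht (hdsq k).le
    calc phat k ^ m * d k ^ 2 + m * c * (p k - phat k)
        = (phat k ^ m + m * phat k ^ (m - 1) * (p k - phat k)) * d k ^ 2 := by
          rw [← hconst k]; ring
      _ ≤ p k ^ m * d k ^ 2 := h2
  calc ∑ k, phat k ^ m * d k ^ 2
      = ∑ k, (phat k ^ m * d k ^ 2 + m * c * (p k - phat k)) := by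
        rw [Finset.sum_add_distrib, ← Finset.mul_sum, Finset.sum_sub_distrib,
          hpsum, hsum, sub_self, mul_zero, add_zero]
    _ ≤ ∑ k, p k ^ m * d k ^ 2 := Finset.sum_le_sum fun k _ => h1 k
end

section
/- Suppose d_k > 0 for every k = 1,…,K. If p ∈ Δ_K satisfies f_d(p) ≤ f_d(q) for every q ∈ Δ_K, then necessarily p_k = [Σ_{l=1}^K (d_k²/d_l²)^{1/(m-1)}]^{-1} for every k; that is, the global minimizer of f_d on the probability simplex is unique and is given by this formula. -/
open Finset Real

/-- Strict tangent-line inequality for `x ↦ x ^ m`. -/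
lemma tangent_strict {m : ℝ} (hm : 1 < m) {x y : ℝ} (hx : 0 ≤ x) (hy : 0 < y)
    (hxy : x ≠ y) : y ^ m + m * y ^ (m - 1) * (x - y) < x ^ m := by
  have hs : (-1 : ℝ) ≤ x / y - 1 := by
    have : 0 ≤ x / y := div_nonneg hx hy.le
    linarith
  have hs' : x / y - 1 ≠ 0 := by
    intro h
    apply hxy
    field_simp at h
    linarith
  have hB := one_add_mul_self_lt_rpow_one_add hs hs' hm
  rw [add_sub_cancel] at hB
  have hym : 0 < y ^ m := rpow_pos_of_pos hy m
  have hdiv : (x / y) ^ m = x ^ m / y ^ m := div_rpow hx hy.le m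
  rw [hdiv] at hB
  have hB2 : (1 + m * (x / y - 1)) * y ^ m < x ^ m := by
    rw [← lt_div_iff₀ hym]; linarith [hB]
  calc y ^ m + m * y ^ (m - 1) * (x - y)
      = (1 + m * (x / y - 1)) * y ^ m := by
        rw [rpow_sub_one hy.ne' m]
        field_simp
    _ < x ^ m := hB2

lemma tangent_le {m : ℝ} (hm : 1 < m) {x y : ℝ} (hx : 0 ≤ x) (hy : 0 < y) :
    y ^ m + m * y ^ (m - 1) * (x - y) ≤ x ^ m := by
  rcases eq_or_ne x y with rfl | h
  · simp
  · exact (tangent_strict hm hx hy h).le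

/-- For positive `d`, any global minimizer of `f_d` on the probability
simplex must be given by `p_k = [Σ_l (d_k²/d_l²)^{1/(m-1)}]⁻¹`; the minimizer is unique. -/
theorem minimizer_unique_eq_phat
    (K : ℕ) (hK : 1 ≤ K) (m : ℝ) (hm : 1 < m)
    (d : Fin K → ℝ) (hd : ∀ k, 0 < d k)
    (p : Fin K → ℝ)
    (hp : (∀ k, 0 ≤ p k ∧ p k ≤ 1) ∧ ∑ k, p k = 1)
    (hmin : ∀ q : Fin K → ℝ, ((∀ k, 0 ≤ q k ∧ q k ≤ 1) ∧ ∑ k, q k = 1) →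
        ∑ k, p k ^ m * d k ^ 2 ≤ ∑ k, q k ^ m * d k ^ 2) :
    ∀ k, p k = (∑ l, ((d k ^ 2) / (d l ^ 2)) ^ ((1 : ℝ) / (m - 1)))⁻¹ := by
  have hm1 : (0:ℝ) < m - 1 := by linarith
  set t : ℝ := 1 / (m - 1) with ht
  have hd2 : ∀ k, (0:ℝ) < d k ^ 2 := fun k => by have := hd k; positivity
  set w : Fin K → ℝ := fun k => (d k ^ 2) ^ (-t) with hw_def
  have hw : ∀ k, 0 < w k := fun k => rpow_pos_of_pos (hd2 k) _
  haveI : Nonempty (Fin K) := ⟨⟨0, hK⟩⟩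
  set S : ℝ := ∑ l, w l with hS_def
  have hS : 0 < S := Finset.sum_pos (fun l _ => hw l) univ_nonempty
  set q : Fin K → ℝ := fun k => w k / S with hq_def
  -- the formula in the statement equals q k
  have hformula : ∀ k, (∑ l, ((d k ^ 2) / (d l ^ 2)) ^ t)⁻¹ = q k := by
    intro k
    have h1 : ∑ l, ((d k ^ 2) / (d l ^ 2)) ^ t = (d k ^ 2) ^ t * S := by
      rw [hS_def, Finset.mul_sum]
      refine Finset.sum_congr rfl fun l _ => ?_
      show ((d k ^ 2) / (d l ^ 2)) ^ t = (d k ^ 2) ^ t * (d l ^ 2) ^ (-t)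
      rw [div_rpow (hd2 k).le (hd2 l).le, rpow_neg (hd2 l).le, div_eq_mul_inv]
    rw [h1, mul_inv]
    show ((d k ^ 2) ^ t)⁻¹ * S⁻¹ = (d k ^ 2) ^ (-t) / S
    rw [rpow_neg (hd2 k).le, div_eq_mul_inv]
  -- q is in the simplex
  have hqsum : ∑ k, q k = 1 := by
    show ∑ k, w k / S = 1
    rw [← Finset.sum_div, ← hS_def, div_self hS.ne']
  have hqpos : ∀ k, 0 < q k := fun k => div_pos (hw k) hS
  have hq01 : ∀ k, 0 ≤ q k ∧ q k ≤ 1 := by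
    intro k
    refine ⟨(hqpos k).le, ?_⟩
    show w k / S ≤ 1
    rw [div_le_one hS]
    exact Finset.single_le_sum (fun l _ => (hw l).le) (mem_univ k)
  -- the key Lagrange identity: q k ^ (m-1) * d k ^ 2 is constant
  have hlam : ∀ k, q k ^ (m - 1) * d k ^ 2 = (S ^ (m-1))⁻¹ := by
    intro k
    have hwm : w k ^ (m - 1) = (d k ^ 2)⁻¹ := by
      show ((d k ^ 2) ^ (-t)) ^ (m - 1) = (d k ^ 2)⁻¹
      rw [← rpow_mul (hd2 k).le]
      have : -t * (m - 1) = -1 := by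
        rw [ht]; field_simp
      rw [this, rpow_neg_one]
    show (w k / S) ^ (m - 1) * d k ^ 2 = (S ^ (m-1))⁻¹
    rw [div_rpow (hw k).le hS.le, hwm]
    field_simp
    exact div_self (hd k).ne'
  -- suppose p k0 ≠ q k0 for some k0; derive contradiction
  intro k0
  rw [hformula k0]
  by_contra hne
  -- strict tangent inequality summed over k
  have key : ∑ k, (q k ^ m * d k ^ 2 + m * (q k ^ (m-1) * d k ^ 2) * (p k - q k))
      < ∑ k, p k ^ m * d k ^ 2 := by
    refine Finset.sum_lt_sum (fun k _ => ?_) ⟨k0, mem_univ k0, ?_⟩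
    · have := tangent_le hm (hp.1 k).1 (hqpos k)
      nlinarith [sq_nonneg (d k), hd2 k]
    · have := tangent_strict hm (hp.1 k0).1 (hqpos k0) hne
      nlinarith [hd2 k0]
  -- the linear term vanishes
  have hlin : ∑ k, (q k ^ m * d k ^ 2 + m * (q k ^ (m-1) * d k ^ 2) * (p k - q k))
      = ∑ k, q k ^ m * d k ^ 2 := by
    rw [Finset.sum_add_distrib]
    have h0 : ∑ k, m * (q k ^ (m-1) * d k ^ 2) * (p k - q k) = 0 := by
      have : ∀ k ∈ univ, m * (q k ^ (m-1) * d k ^ 2) * (p k - q k)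
          = (m * (S ^ (m-1))⁻¹) * (p k - q k) := by
        intro k _
        rw [hlam k]
      have hsum0 : ∑ k, (p k - q k) = 0 := by
        simp [Finset.sum_sub_distrib, hp.2, hqsum]
      rw [Finset.sum_congr rfl this, ← Finset.mul_sum, hsum0, mul_zero]
    rw [h0, add_zero]
  rw [hlin] at key
  exact absurd (hmin q ⟨hq01, hqsum⟩) (not_le.mpr key)
end

section
/- Suppose d_k > 0 for every k = 1,…,K. Then the minimum of f_d over the probability simplex Δ_K equals (Σ_{k=1}^K d_k^{-2/(m-1)})^{1-m}. -/
open Finset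

/-- For positive `d`, the minimum of `f_d` over the probability simplex
equals `(Σ_k d_k^{-2/(m-1)})^{1-m}`. -/
theorem min_fd_eq
    (K : ℕ) (hK : 1 ≤ K) (m : ℝ) (hm : 1 < m)
    (d : Fin K → ℝ) (hd : ∀ k, 0 < d k) :
    IsLeast ((fun p : Fin K → ℝ => ∑ k, p k ^ m * d k ^ 2) ''
        {p | (∀ k, 0 ≤ p k ∧ p k ≤ 1) ∧ ∑ k, p k = 1})
      ((∑ k, d k ^ ((-2 : ℝ) / (m - 1))) ^ (1 - m)) := by
  have hne : Nonempty (Fin K) := ⟨⟨0, hK⟩⟩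
  have hm0 : (0:ℝ) < m := lt_trans zero_lt_one hm
  have hm1 : m - 1 ≠ 0 := sub_ne_zero.mpr hm.ne'
  set e : ℝ := (-2 : ℝ) / (m - 1) with he
  set S : ℝ := ∑ k, d k ^ e with hS
  have hterm : ∀ k, (0:ℝ) < d k ^ e := fun k => Real.rpow_pos_of_pos (hd k) _
  have hSpos : 0 < S := Finset.sum_pos (fun k _ => hterm k) univ_nonempty
  have hem : e * m + 2 = e := by rw [he]; field_simp; ring
  constructor
  · -- membership: witness p k = d k ^ e / S
    refine ⟨fun k => d k ^ e / S, ⟨fun k => ⟨div_nonneg (hterm k).le hSpos.le, ?_⟩, ?_⟩, ?_⟩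
    · rw [div_le_one hSpos]
      exact Finset.single_le_sum (fun k _ => (hterm k).le) (mem_univ k)
    · rw [← Finset.sum_div, ← hS, div_self hSpos.ne']
    · simp only
      have : ∀ k : Fin K, (d k ^ e / S) ^ m * d k ^ 2 = d k ^ e / S ^ m := by
        intro k
        rw [Real.div_rpow (hterm k).le hSpos.le, ← Real.rpow_natCast (d k) 2,
          div_mul_eq_mul_div, ← Real.rpow_mul (hd k).le, ← Real.rpow_add (hd k)]
        norm_num [hem]
      rw [Finset.sum_congr rfl (fun k _ => this k), ← Finset.sum_div, ← hS,
        Real.rpow_sub hSpos, Real.rpow_one]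
  · -- lower bound via Hölder
    rintro x ⟨p, ⟨hp01, hpsum⟩, rfl⟩
    simp only
    set A : ℝ := ∑ k, p k ^ m * d k ^ 2 with hA
    have hAnn : 0 ≤ A :=
      Finset.sum_nonneg fun k _ => mul_nonneg (Real.rpow_nonneg (hp01 k).1 _) (sq_nonneg _)
    set q : ℝ := m / (m - 1) with hq
    have hpq : Real.HolderConjugate m q := by
      exact (Real.holderConjugate_iff_eq_conjExponent hm).mpr hq
    have holder := Real.inner_le_Lp_mul_Lq_of_nonneg (univ : Finset (Fin K))
      (f := fun k => p k * d k ^ ((2:ℝ)/m)) (g := fun k => d k ^ ((-2:ℝ)/m)) hpq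
      (fun k _ => mul_nonneg (hp01 k).1 (Real.rpow_nonneg (hd k).le _))
      (fun k _ => (Real.rpow_pos_of_pos (hd k) _).le)
    have h1 : ∀ k : Fin K, p k * d k ^ ((2:ℝ)/m) * d k ^ ((-2:ℝ)/m) = p k := by
      intro k
      rw [mul_assoc, ← Real.rpow_add (hd k), show (2:ℝ)/m + -2/m = 0 by ring,
        Real.rpow_zero, mul_one]
    have h2 : ∀ k : Fin K, (p k * d k ^ ((2:ℝ)/m)) ^ m = p k ^ m * d k ^ 2 := by
      intro k
      rw [Real.mul_rpow (hp01 k).1 (Real.rpow_nonneg (hd k).le _),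
        ← Real.rpow_mul (hd k).le, div_mul_cancel₀ _ hm0.ne', ← Real.rpow_natCast (d k) 2]
      norm_num
    have h3 : ∀ k : Fin K, (d k ^ ((-2:ℝ)/m)) ^ q = d k ^ e := by
      intro k
      rw [← Real.rpow_mul (hd k).le, hq, he]
      congr 1
      field_simp
    rw [Finset.sum_congr rfl (fun k _ => h1 k), hpsum,
      Finset.sum_congr rfl (fun k _ => h2 k),
      Finset.sum_congr rfl (fun k _ => h3 k), ← hA, ← hS] at holder
    -- holder : 1 ≤ A ^ (1/m) * S ^ (1/q)
    have key : S ^ (-(1/q)) ≤ A ^ (1/m) := by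
      have h4 : 1 * S ^ (-(1/q)) ≤ (A ^ (1/m) * S ^ (1/q)) * S ^ (-(1/q)) :=
        mul_le_mul_of_nonneg_right holder (Real.rpow_nonneg hSpos.le _)
      rwa [one_mul, mul_assoc, ← Real.rpow_add hSpos, add_neg_cancel,
        Real.rpow_zero, mul_one] at h4
    have h5 := Real.rpow_le_rpow (Real.rpow_nonneg hSpos.le _) key hm0.le
    rw [← Real.rpow_mul hSpos.le, ← Real.rpow_mul hAnn,
      one_div_mul_cancel hm0.ne', Real.rpow_one] at h5
    have heq : -(1/q) * m = 1 - m := by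
      rw [hq]; field_simp; ring
    rwa [heq] at h5
end

section
/- Suppose |R| ≥ K. Then the minimum of F over the set of feasible matrices equals Σ_{i ∈ R} (Σ_{k=1}^K d_{k,i}^{-2/(m-1)})^{1-m}. -/
open Finset


lemma col_min {K : ℕ} (hK : 0 < K) (m : ℝ) (hm : 1 < m) (d : Fin K → ℝ)
    (hd : ∀ k, 0 < d k) (p : Fin K → ℝ) (hp : ∀ k, 0 ≤ p k) (hs : ∑ k, p k = 1) :
    (∑ k, d k ^ ((-2 : ℝ) / (m - 1))) ^ (1 - m) ≤ ∑ k, p k ^ m * d k ^ 2 := by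
  have hm0 : (0 : ℝ) < m := lt_trans one_pos hm
  have hm1 : (0 : ℝ) < m - 1 := by linarith
  have : Nonempty (Fin K) := Fin.pos_iff_nonempty.mp hK
  set q : ℝ := m / (m - 1) with hq
  have hpq : m.HolderConjugate q :=
    (Real.holderConjugate_iff_eq_conjExponent hm).mpr rfl
  set S : ℝ := ∑ k, d k ^ ((-2 : ℝ) / (m - 1)) with hS
  set A : ℝ := ∑ k, p k ^ m * d k ^ 2 with hA
  have hSpos : 0 < S := Finset.sum_pos (fun k _ => Real.rpow_pos_of_pos (hd k) _)
    Finset.univ_nonempty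
  have hAnn : 0 ≤ A := Finset.sum_nonneg fun k _ =>
    mul_nonneg (Real.rpow_nonneg (hp k) _) (sq_nonneg _)
  -- Hölder
  have hold := Real.inner_le_Lp_mul_Lq_of_nonneg (univ : Finset (Fin K))
    (f := fun k => p k * d k ^ ((2 : ℝ) / m)) (g := fun k => d k ^ ((-2 : ℝ) / m)) hpq
    (fun k _ => mul_nonneg (hp k) (Real.rpow_nonneg (hd k).le _))
    (fun k _ => Real.rpow_nonneg (hd k).le _)
  have e1 : ∑ k, (p k * d k ^ ((2 : ℝ) / m)) * d k ^ ((-2 : ℝ) / m) = 1 := by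
    rw [← hs]
    refine Finset.sum_congr rfl fun k _ => ?_
    rw [mul_assoc, ← Real.rpow_add (hd k)]
    have h0 : (2 : ℝ) / m + -2 / m = 0 := by ring
    rw [h0, Real.rpow_zero, mul_one]
  have e2 : ∑ k, (p k * d k ^ ((2 : ℝ) / m)) ^ m = A := by
    refine Finset.sum_congr rfl fun k _ => ?_
    rw [Real.mul_rpow (hp k) (Real.rpow_nonneg (hd k).le _), ← Real.rpow_mul (hd k).le]
    have h0 : (2 : ℝ) / m * m = ((2 : ℕ) : ℝ) := by push_cast; field_simp
    rw [h0, Real.rpow_natCast]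
  have e3 : ∑ k, (d k ^ ((-2 : ℝ) / m)) ^ q = S := by
    refine Finset.sum_congr rfl fun k _ => ?_
    rw [← Real.rpow_mul (hd k).le]
    congr 1
    rw [hq]
    field_simp
  rw [e1, e2, e3] at hold
  have hSq : 0 < S ^ (1 / q) := Real.rpow_pos_of_pos hSpos _
  have h2 : S ^ (-(1 / q)) ≤ A ^ (1 / m) := by
    have := (div_le_iff₀ hSq).mpr hold
    rwa [one_div, ← Real.rpow_neg hSpos.le] at this
  have h3 := Real.rpow_le_rpow (Real.rpow_nonneg hSpos.le _) h2 hm0.le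
  rw [← Real.rpow_mul hSpos.le, ← Real.rpow_mul hAnn] at h3
  have eA : 1 / m * m = 1 := by field_simp
  have eS : -(1 / q) * m = 1 - m := by rw [hq]; field_simp; try ring
  rw [eA, eS, Real.rpow_one] at h3
  exact h3

/-- With `|R| ≥ K`, the minimum of `F` over feasible membership matrices
equals `Σ_{i ∈ R} (Σ_k d_{k,i}^{-2/(m-1)})^{1-m}`. -/
theorem min_F_eq
    (K N : ℕ) (hK : 1 ≤ K) (hN : 1 ≤ N) (m : ℝ) (hm : 1 < m)
    (d : Fin K → Fin N → ℝ) (hd : ∀ k i, 0 ≤ d k i)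
    (hR : K ≤ (Finset.univ.filter fun i : Fin N => ∀ k, 0 < d k i).card) :
    IsLeast ((fun P : Fin K → Fin N → ℝ => ∑ i, ∑ k, P k i ^ m * d k i ^ 2) ''
        {P | (∀ k i, P k i ∈ Set.Icc (0 : ℝ) 1) ∧ (∀ i, ∑ k, P k i = 1) ∧
          (∀ k, 0 < ∑ i, P k i)})
      (∑ i ∈ Finset.univ.filter fun i : Fin N => ∀ k, 0 < d k i,
        (∑ k, d k i ^ ((-2 : ℝ) / (m - 1))) ^ (1 - m)) := by
  classical
  have hKpos : 0 < K := hK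
  have : Nonempty (Fin K) := Fin.pos_iff_nonempty.mp hKpos
  have hm1 : (0 : ℝ) < m - 1 := by linarith
  have hm0 : (0 : ℝ) < m := by linarith
  set R : Finset (Fin N) := Finset.univ.filter fun i : Fin N => ∀ k, 0 < d k i with hRdef
  have hRne : R.Nonempty := Finset.card_pos.mp (lt_of_lt_of_le hKpos hR)
  set S : Fin N → ℝ := fun i => ∑ k, d k i ^ ((-2 : ℝ) / (m - 1)) with hSdef
  have hSpos : ∀ i, (∀ k, 0 < d k i) → 0 < S i := fun i hi =>
    Finset.sum_pos (fun k _ => Real.rpow_pos_of_pos (hi k) _) Finset.univ_nonempty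
  -- a zero column index for each i not in R
  have hex : ∀ i : Fin N, ∃ k : Fin K, (¬∀ j, 0 < d j i) → d k i = 0 := by
    intro i
    by_cases h : ∀ j, 0 < d j i
    · exact ⟨Classical.arbitrary _, fun h' => absurd h h'⟩
    · push_neg at h
      obtain ⟨k, hk⟩ := h
      exact ⟨k, fun _ => le_antisymm hk (hd k i)⟩
  choose k0 hk0 using hex
  set P : Fin K → Fin N → ℝ := fun k i =>
    if ∀ j, 0 < d j i then d k i ^ ((-2 : ℝ) / (m - 1)) / S i
    else if k = k0 i then 1 else 0 with hPdef
  constructor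
  · -- membership
    refine ⟨P, ⟨?_, ?_, ?_⟩, ?_⟩
    · intro k i
      by_cases h : ∀ j, 0 < d j i
      · have hSi := hSpos i h
        constructor
        · simp only [hPdef, if_pos h]
          exact div_nonneg (Real.rpow_nonneg (hd k i) _) hSi.le
        · simp only [hPdef, if_pos h]
          rw [div_le_one hSi]
          exact Finset.single_le_sum (fun j _ => (Real.rpow_pos_of_pos (h j) _).le)
            (Finset.mem_univ k)
      · simp only [hPdef, if_neg h]
        by_cases hk : k = k0 i <;> simp [hk]
    · intro i
      by_cases h : ∀ j, 0 < d j i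
      · simp only [hPdef, if_pos h]
        rw [← Finset.sum_div, div_self (hSpos i h).ne']
      · simp only [hPdef, if_neg h]
        rw [Finset.sum_ite_eq' Finset.univ (k0 i) (fun _ => (1 : ℝ))]
        simp
    · intro k
      obtain ⟨i0, hi0⟩ := hRne
      rw [hRdef, Finset.mem_filter] at hi0
      refine Finset.sum_pos' ?_ ⟨i0, Finset.mem_univ i0, ?_⟩
      · intro i _
        by_cases h : ∀ j, 0 < d j i
        · simp only [hPdef, if_pos h]
          exact div_nonneg (Real.rpow_nonneg (hd k i) _) (hSpos i h).le
        · simp only [hPdef, if_neg h]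
          by_cases hk : k = k0 i <;> simp [hk]
      · simp only [hPdef, if_pos hi0.2]
        exact div_pos (Real.rpow_pos_of_pos (hi0.2 k) _) (hSpos i0 hi0.2)
    · -- value of F at P
      show ∑ i : Fin N, ∑ k, P k i ^ m * d k i ^ 2 = ∑ i ∈ R, (S i) ^ (1 - m)
      rw [← Finset.sum_filter_add_sum_filter_not Finset.univ
        (fun i : Fin N => ∀ k, 0 < d k i) (fun i => ∑ k, P k i ^ m * d k i ^ 2)]
      have hz : ∑ i ∈ Finset.univ.filter (fun i : Fin N => ¬∀ k, 0 < d k i),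
          (∑ k, P k i ^ m * d k i ^ 2) = 0 := by
        refine Finset.sum_eq_zero fun i hi => ?_
        rw [Finset.mem_filter] at hi
        refine Finset.sum_eq_zero fun k _ => ?_
        simp only [hPdef, if_neg hi.2]
        by_cases hk : k = k0 i
        · rw [if_pos hk, hk, hk0 i hi.2]
          ring
        · rw [if_neg hk, Real.zero_rpow hm0.ne', zero_mul]
      rw [hz, add_zero]
      refine (Finset.sum_congr rfl fun i hi => ?_).symm
      rw [Finset.mem_filter] at hi
      have hi2 := hi.2
      have hSi := hSpos i hi2
      have hterm : ∀ k, P k i ^ m * d k i ^ 2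
          = d k i ^ ((-2 : ℝ) / (m - 1)) / S i ^ m := by
        intro k
        simp only [hPdef, if_pos hi2]
        rw [Real.div_rpow (Real.rpow_nonneg (hd k i) _) hSi.le,
          ← Real.rpow_mul (hd k i), ← Real.rpow_natCast (d k i) 2,
          div_mul_eq_mul_div, ← Real.rpow_add (hi2 k)]
        congr 2
        push_cast
        field_simp
        ring
      rw [Finset.sum_congr rfl fun k _ => hterm k, ← Finset.sum_div]
      show S i ^ (1 - m) = S i / S i ^ m
      rw [Real.rpow_sub hSi, Real.rpow_one]
  · -- lower bound
    rintro y ⟨Q, ⟨hQ01, hQsum, _⟩, rfl⟩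
    have hnn : ∀ i : Fin N, 0 ≤ ∑ k, Q k i ^ m * d k i ^ 2 := fun i =>
      Finset.sum_nonneg fun k _ =>
        mul_nonneg (Real.rpow_nonneg (hQ01 k i).1 _) (sq_nonneg _)
    calc ∑ i ∈ R, (S i) ^ (1 - m)
        ≤ ∑ i ∈ R, ∑ k, Q k i ^ m * d k i ^ 2 := by
          refine Finset.sum_le_sum fun i hi => ?_
          rw [hRdef, Finset.mem_filter] at hi
          exact col_min hKpos m hm (fun k => d k i) hi.2 (fun k => Q k i)
            (fun k => (hQ01 k i).1) (hQsum i)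
      _ ≤ ∑ i, ∑ k, Q k i ^ m * d k i ^ 2 :=
          Finset.sum_le_sum_of_subset_of_nonneg (Finset.subset_univ R)
            (fun i _ _ => hnn i)
end

section
/- The functional J_m is continuous as a map from [0,1]^{K×N} × ℝ^{K×N} × Π_{k=1}^K L²((0,c_k), ℝ^d) to ℝ, where the domain carries the product topology (Euclidean topology on the membership-matrix and shift-matrix factors, and the L²-norm topology on each cluster-center factor). -/
open MeasureTheory Finset

lemma shift_continuous_aux {d : ℕ}
    (f : Lp (EuclideanSpace ℝ (Fin d)) 2 (volume : Measure ℝ)) :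
    Continuous fun s : ℝ =>
      Lp.compMeasurePreserving (α := ℝ) (β := ℝ)
        (fun t => t + s) (measurePreserving_add_right volume s) f := by
  have hg : Continuous fun s : ℝ => (⟨fun t => t + s, by continuity⟩ : C(ℝ, ℝ)) := by
    apply ContinuousMap.continuous_of_continuous_uncurry
    exact continuous_snd.add continuous_fst
  exact Continuous.compMeasurePreservingLp (f := fun _ => f)
    continuous_const hg (fun s => measurePreserving_add_right volume s) (by norm_num)

/-- The functional
`J_m(P,S,v) = Σ_i Σ_k p_{k,i}^m ‖x̃_{i,s_{k,i}}|_{(0,c_k)} − v_k‖²` is continuous on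
`[0,1]^{K×N} × ℝ^{K×N} × Π_k L²((0,c_k), ℝ^d)` with the product topology. Here
`Rr k s i ∈ L²((0,c_k), ℝ^d)` denotes the restriction to `(0,c_k)` of the shifted
curve `t ↦ x_i(t+s)`, specified by its a.e. representation. -/
theorem Jm_continuousOn
    (N K d : ℕ) (hN : 1 ≤ N) (hK : 1 ≤ K) (hd : 1 ≤ d) (m : ℝ) (hm : 1 < m)
    (x : Fin N → Lp (EuclideanSpace ℝ (Fin d)) 2 (volume : Measure ℝ))
    (c : Fin K → ℝ) (hc : ∀ k, 0 < c k)
    (Rr : (k : Fin K) → ℝ → Fin N →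
      Lp (EuclideanSpace ℝ (Fin d)) 2 (volume.restrict (Set.Ioo (0 : ℝ) (c k))))
    (hRr : ∀ k s i, ⇑(Rr k s i) =ᵐ[volume.restrict (Set.Ioo (0 : ℝ) (c k))]
      fun t => x i (t + s)) :
    ContinuousOn
      (fun y : (Fin K → Fin N → ℝ) × (Fin K → Fin N → ℝ) ×
          ((k : Fin K) →
            Lp (EuclideanSpace ℝ (Fin d)) 2 (volume.restrict (Set.Ioo (0 : ℝ) (c k)))) =>
        ∑ i, ∑ k, y.1 k i ^ m * ‖Rr k (y.2.1 k i) i - y.2.2 k‖ ^ 2)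
      {y | ∀ k i, y.1 k i ∈ Set.Icc (0 : ℝ) 1} := by
  -- Continuity of the shift `s ↦ Rr k s i` in the `L²((0, c k))` norm.
  have hcont : ∀ (k : Fin K) (i : Fin N), Continuous fun s : ℝ => Rr k s i := by
    intro k i
    set G : ℝ → Lp (EuclideanSpace ℝ (Fin d)) 2 (volume : Measure ℝ) := fun s =>
      Lp.compMeasurePreserving (α := ℝ) (β := ℝ)
        (fun t => t + s) (measurePreserving_add_right volume s) (x i) with hGdef
    have hG : Continuous G := shift_continuous_aux (x i)
    have hGcoe : ∀ s, ⇑(G s) =ᵐ[volume] fun t => x i (t + s) := fun s =>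
      Lp.coeFn_compMeasurePreserving (x i) (measurePreserving_add_right volume s)
    have key : ∀ s₁ s₂ : ℝ, ‖Rr k s₁ i - Rr k s₂ i‖ ≤ ‖G s₁ - G s₂‖ := by
      intro s₁ s₂
      rw [Lp.norm_def, Lp.norm_def]
      apply ENNReal.toReal_mono (Lp.eLpNorm_ne_top _)
      calc eLpNorm (⇑(Rr k s₁ i - Rr k s₂ i)) 2 (volume.restrict (Set.Ioo (0 : ℝ) (c k)))
          = eLpNorm (fun t => x i (t + s₁) - x i (t + s₂)) 2
              (volume.restrict (Set.Ioo (0 : ℝ) (c k))) :=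
            eLpNorm_congr_ae ((Lp.coeFn_sub _ _).trans ((hRr k s₁ i).sub (hRr k s₂ i)))
        _ ≤ eLpNorm (fun t => x i (t + s₁) - x i (t + s₂)) 2 volume :=
            eLpNorm_mono_measure _ Measure.restrict_le_self
        _ = eLpNorm (⇑(G s₁ - G s₂)) 2 volume :=
            (eLpNorm_congr_ae ((Lp.coeFn_sub _ _).trans ((hGcoe s₁).sub (hGcoe s₂)))).symm
    refine continuous_iff_continuousAt.mpr fun s₀ => ?_
    rw [ContinuousAt, tendsto_iff_norm_sub_tendsto_zero]
    have htend : Filter.Tendsto (fun s => ‖G s - G s₀‖) (nhds s₀) (nhds 0) :=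
      tendsto_iff_norm_sub_tendsto_zero.mp (hG.tendsto s₀)
    exact squeeze_zero (fun s => norm_nonneg _) (fun s => key s s₀) htend
  refine Continuous.continuousOn ?_
  apply continuous_finset_sum; intro i _
  apply continuous_finset_sum; intro k _
  apply Continuous.mul
  · have h0 : Continuous fun y : (Fin K → Fin N → ℝ) × (Fin K → Fin N → ℝ) ×
        ((k : Fin K) →
          Lp (EuclideanSpace ℝ (Fin d)) 2 (volume.restrict (Set.Ioo (0 : ℝ) (c k)))) =>
          y.1 k i := by fun_prop
    exact (Real.continuous_rpow_const (by linarith)).comp h0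
  · have h1 : Continuous fun y : (Fin K → Fin N → ℝ) × (Fin K → Fin N → ℝ) ×
        ((k : Fin K) →
          Lp (EuclideanSpace ℝ (Fin d)) 2 (volume.restrict (Set.Ioo (0 : ℝ) (c k)))) =>
          Rr k (y.2.1 k i) i := by
      apply (hcont k i).comp
      fun_prop
    have h2 : Continuous fun y : (Fin K → Fin N → ℝ) × (Fin K → Fin N → ℝ) ×
        ((k : Fin K) →
          Lp (EuclideanSpace ℝ (Fin d)) 2 (volume.restrict (Set.Ioo (0 : ℝ) (c k)))) =>
          y.2.2 k := by fun_prop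
    exact ((h1.sub h2).norm).pow 2
end

section
/- Let (P, S, v_1, …, v_K) be feasible. Perform one iteration of the probKMA map: (i) define new centers v'_k = (Σ_{i=1}^N p_{k,i}^m x̃_{i,s_{k,i}}|_{(0,c_k)})/(Σ_{i=1}^N p_{k,i}^m) (the denominators are positive since Σ_i p_{k,i} > 0); (ii) choose new shifts S' = [s'_{k,i}] such that ‖x̃_{i,s'_{k,i}}|_{(0,c_k)} − v'_k‖ ≤ ‖x̃_{i,s_{k,i}}|_{(0,c_k)} − v'_k‖ for every i and k; (iii) assuming d'_{k,i} := ‖x̃_{i,s'_{k,i}}|_{(0,c_k)} − v'_k‖ > 0 for all i,k, define P' by p'_{k,i} = [Σ_{l=1}^K ((d'_{k,i})²/(d'_{l,i})²)^{1/(m-1)}]^{-1}. Then (P', S', v'_1, …, v'_K) is feasible and J_m(P', S', v'_1, …, v'_K) ≤ J_m(P, S, v_1, …, v_K); that is, J_m descends along one iteration of the algorithm. -/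
open MeasureTheory Finset

lemma tangent_rpow {m s t : ℝ} (hm : 1 < m) (hs : 0 < s) (ht : 0 ≤ t) :
    s ^ m + m * (s ^ (m - 1) * (t - s)) ≤ t ^ m := by
  have hu : (-1 : ℝ) ≤ t / s - 1 := by
    have : 0 ≤ t / s := div_nonneg ht hs.le
    linarith
  have hB := one_add_mul_self_le_rpow_one_add hu hm.le
  rw [add_sub_cancel] at hB
  have hdiv : (t / s) ^ m = t ^ m / s ^ m := Real.div_rpow ht hs.le m
  have hspos : 0 < s ^ m := Real.rpow_pos_of_pos hs m
  have hmul := mul_le_mul_of_nonneg_left hB hspos.le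
  rw [hdiv] at hmul
  have h1 : s ^ m * (t ^ m / s ^ m) = t ^ m := by field_simp
  have h2 : s ^ (m - 1) = s ^ m / s := by
    rw [Real.rpow_sub hs, Real.rpow_one]
  rw [h1] at hmul
  calc s ^ m + m * (s ^ (m - 1) * (t - s))
      = s ^ m * (1 + m * (t / s - 1)) := by rw [h2]; field_simp
    _ ≤ t ^ m := hmul

lemma simplex_opt {ι : Type*} [Fintype ι] [Nonempty ι] {m : ℝ} (hm : 1 < m)
    (a : ι → ℝ) (ha : ∀ k, 0 < a k) (q : ι → ℝ)
    (hq : ∀ k, q k = (∑ l, (a k / a l) ^ ((1 : ℝ) / (m - 1)))⁻¹) :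
    (∀ k, 0 < q k) ∧ (∀ k, q k ≤ 1) ∧ (∑ k, q k = 1) ∧
      ∀ t : ι → ℝ, (∀ k, 0 ≤ t k) → (∑ k, t k = 1) →
        ∑ k, q k ^ m * a k ≤ ∑ k, t k ^ m * a k := by
  have hm1 : (0 : ℝ) < m - 1 := by linarith
  set e : ℝ := 1 / (m - 1) with he_def
  have he : 0 < e := by positivity
  set u : ι → ℝ := fun k => a k ^ e with hu_def
  have hu : ∀ k, 0 < u k := fun k => Real.rpow_pos_of_pos (ha k) e
  set T : ℝ := ∑ l, (u l)⁻¹ with hT_def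
  have hT : 0 < T :=
    Finset.sum_pos (fun l _ => inv_pos.mpr (hu l)) Finset.univ_nonempty
  have hqk : ∀ k, q k = (u k)⁻¹ * T⁻¹ := by
    intro k
    rw [hq k]
    have : ∀ l, (a k / a l) ^ e = u k * (u l)⁻¹ := by
      intro l
      rw [Real.div_rpow (ha k).le (ha l).le, div_eq_mul_inv]
    simp_rw [this]
    rw [← Finset.mul_sum, ← hT_def, mul_inv]
  have hq0 : ∀ k, 0 < q k := by
    intro k; rw [hqk k]
    exact mul_pos (inv_pos.mpr (hu k)) (inv_pos.mpr hT)
  have hsum_q : ∑ k, q k = 1 := by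
    simp_rw [hqk]
    rw [← Finset.sum_mul, ← hT_def, mul_inv_cancel₀ hT.ne']
  have hq1 : ∀ k, q k ≤ 1 := by
    intro k
    rw [← hsum_q]
    exact Finset.single_le_sum (fun l _ => (hq0 l).le) (Finset.mem_univ k)
  refine ⟨hq0, hq1, hsum_q, ?_⟩
  intro t ht hsum_t
  have hconst : ∀ k, q k ^ (m - 1) * a k = (T ^ (m - 1))⁻¹ := by
    intro k
    rw [hqk k, Real.mul_rpow (inv_nonneg.mpr (hu k).le) (inv_nonneg.mpr hT.le),
      Real.inv_rpow (hu k).le, Real.inv_rpow hT.le]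
    have hue : u k ^ (m - 1) = a k := by
      show (a k ^ e) ^ (m - 1) = a k
      rw [← Real.rpow_mul (ha k).le, show e * (m - 1) = 1 by rw [he_def]; field_simp,
        Real.rpow_one]
    rw [hue, mul_comm, ← mul_assoc, mul_inv_cancel₀ (ha k).ne', one_mul]
  have key : ∀ k, q k ^ m * a k + (m * (T ^ (m - 1))⁻¹) * (t k - q k)
      ≤ t k ^ m * a k := by
    intro k
    have h := tangent_rpow hm (hq0 k) (ht k)
    have h2 := mul_le_mul_of_nonneg_right h (ha k).le
    calc q k ^ m * a k + (m * (T ^ (m - 1))⁻¹) * (t k - q k)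
        = (q k ^ m + m * (q k ^ (m - 1) * (t k - q k))) * a k := by
          rw [← hconst k]; ring
      _ ≤ t k ^ m * a k := h2
  calc ∑ k, q k ^ m * a k
      = ∑ k, (q k ^ m * a k + (m * (T ^ (m - 1))⁻¹) * (t k - q k)) := by
        rw [Finset.sum_add_distrib, ← Finset.mul_sum, Finset.sum_sub_distrib,
          hsum_t, hsum_q, sub_self, mul_zero, add_zero]
    _ ≤ ∑ k, t k ^ m * a k := Finset.sum_le_sum fun k _ => key k
lemma center_opt {F : Type*} [NormedAddCommGroup F] [InnerProductSpace ℝ F]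
    {ι : Type*} [Fintype ι] (w : ι → ℝ) (hw : ∀ i, 0 ≤ w i)
    (hsum : (∑ i, w i) ≠ 0) (R : ι → F) (v : F) :
    ∑ i, w i * ‖R i - ((∑ i, w i)⁻¹ • ∑ i, w i • R i)‖ ^ 2 ≤
      ∑ i, w i * ‖R i - v‖ ^ 2 := by
  set v' : F := (∑ i, w i)⁻¹ • ∑ i, w i • R i with hv'
  have hzero : (∑ i, w i • (R i - v')) = 0 := by
    simp only [smul_sub]
    rw [Finset.sum_sub_distrib, ← Finset.sum_smul, hv', smul_smul,
      mul_inv_cancel₀ hsum, one_smul, sub_self]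
  have h0 : (inner ℝ (∑ i, w i • (R i - v')) (v' - v) : ℝ) = 0 := by
    rw [hzero, inner_zero_left]
  rw [sum_inner] at h0
  simp only [real_inner_smul_left] at h0
  have expand : ∀ i, w i * ‖R i - v‖ ^ 2 =
      w i * ‖R i - v'‖ ^ 2 + (2 * (w i * (inner ℝ (R i - v') (v' - v) : ℝ))
        + w i * ‖v' - v‖ ^ 2) := by
    intro i
    have h1 : R i - v = (R i - v') + (v' - v) := by abel
    rw [h1, norm_add_sq_real]; ring
  calc ∑ i, w i * ‖R i - v'‖ ^ 2
      ≤ ∑ i, w i * ‖R i - v'‖ ^ 2 +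
        (2 * ∑ i, w i * (inner ℝ (R i - v') (v' - v) : ℝ)
          + ∑ i, w i * ‖v' - v‖ ^ 2) := by
        rw [h0]
        have : 0 ≤ ∑ i, w i * ‖v' - v‖ ^ 2 :=
          Finset.sum_nonneg fun i _ => mul_nonneg (hw i) (sq_nonneg _)
        linarith
    _ = ∑ i, w i * ‖R i - v‖ ^ 2 := by
        rw [Finset.mul_sum, ← Finset.sum_add_distrib, ← Finset.sum_add_distrib]
        exact Finset.sum_congr rfl fun i _ => (expand i).symm

/-- One iteration of the probKMA map (center update by weighted means,
shift update decreasing the distances, membership update by the explicit formula,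
assuming all new distances are positive) maps a feasible triple to a feasible triple
and does not increase `J_m`. Here `Rr k s i ∈ L²((0,c_k), ℝ^d)` denotes the restriction
to `(0,c_k)` of the shifted curve `t ↦ x_i(t+s)`. -/
theorem probKMA_iteration_descent
    (N K d : ℕ) (hN : 1 ≤ N) (hK : 1 ≤ K) (hd : 1 ≤ d) (m : ℝ) (hm : 1 < m)
    (x : Fin N → Lp (EuclideanSpace ℝ (Fin d)) 2 (volume : Measure ℝ))
    (c : Fin K → ℝ) (hc : ∀ k, 0 < c k)
    (Rr : (k : Fin K) → ℝ → Fin N →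
      Lp (EuclideanSpace ℝ (Fin d)) 2 (volume.restrict (Set.Ioo (0 : ℝ) (c k))))
    (hRr : ∀ k s i, ⇑(Rr k s i) =ᵐ[volume.restrict (Set.Ioo (0 : ℝ) (c k))]
      fun t => x i (t + s))
    (P S : Fin K → Fin N → ℝ)
    (hP01 : ∀ k i, P k i ∈ Set.Icc (0 : ℝ) 1)
    (hPcol : ∀ i, ∑ k, P k i = 1)
    (hProw : ∀ k, 0 < ∑ i, P k i)
    (v v' : (k : Fin K) →
      Lp (EuclideanSpace ℝ (Fin d)) 2 (volume.restrict (Set.Ioo (0 : ℝ) (c k))))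
    (hv' : ∀ k, v' k = (∑ i, P k i ^ m)⁻¹ • ∑ i, P k i ^ m • Rr k (S k i) i)
    (S' : Fin K → Fin N → ℝ)
    (hS' : ∀ k i, ‖Rr k (S' k i) i - v' k‖ ≤ ‖Rr k (S k i) i - v' k‖)
    (hdpos : ∀ k i, 0 < ‖Rr k (S' k i) i - v' k‖)
    (P' : Fin K → Fin N → ℝ)
    (hP' : ∀ k i, P' k i =
      (∑ l, (‖Rr k (S' k i) i - v' k‖ ^ 2 / ‖Rr l (S' l i) i - v' l‖ ^ 2) ^
        ((1 : ℝ) / (m - 1)))⁻¹) :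
    ((∀ k i, P' k i ∈ Set.Icc (0 : ℝ) 1) ∧ (∀ i, ∑ k, P' k i = 1) ∧
        (∀ k, 0 < ∑ i, P' k i)) ∧
      (∑ i, ∑ k, P' k i ^ m * ‖Rr k (S' k i) i - v' k‖ ^ 2) ≤
        ∑ i, ∑ k, P k i ^ m * ‖Rr k (S k i) i - v k‖ ^ 2 := by
  haveI : Nonempty (Fin K) := Fin.pos_iff_nonempty.mp hK
  haveI : Nonempty (Fin N) := Fin.pos_iff_nonempty.mp hN
  -- per-column simplex optimality facts
  have hB : ∀ i, (∀ k, 0 < P' k i) ∧ (∀ k, P' k i ≤ 1) ∧ (∑ k, P' k i = 1) ∧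
      ∀ t : Fin K → ℝ, (∀ k, 0 ≤ t k) → (∑ k, t k = 1) →
        ∑ k, P' k i ^ m * ‖Rr k (S' k i) i - v' k‖ ^ 2 ≤
          ∑ k, t k ^ m * ‖Rr k (S' k i) i - v' k‖ ^ 2 := by
    intro i
    exact simplex_opt hm (fun k => ‖Rr k (S' k i) i - v' k‖ ^ 2)
      (fun k => pow_pos (hdpos k i) 2) (fun k => P' k i) (fun k => hP' k i)
  have hw : ∀ k i, 0 ≤ P k i ^ m := fun k i => Real.rpow_nonneg (hP01 k i).1 m
  have hwpos : ∀ k, (0 : ℝ) < ∑ i, P k i ^ m := by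
    intro k
    obtain ⟨i0, hi0⟩ : ∃ i, 0 < P k i := by
      by_contra h
      push_neg at h
      exact absurd (hProw k)
        (not_lt.mpr (Finset.sum_nonpos fun i _ => h i))
    exact Finset.sum_pos' (fun i _ => hw k i)
      ⟨i0, Finset.mem_univ i0, Real.rpow_pos_of_pos hi0 m⟩
  refine ⟨⟨fun k i => ⟨((hB i).1 k).le, (hB i).2.1 k⟩,
    fun i => (hB i).2.2.1,
    fun k => Finset.sum_pos (fun i _ => (hB i).1 k) Finset.univ_nonempty⟩, ?_⟩
  calc ∑ i, ∑ k, P' k i ^ m * ‖Rr k (S' k i) i - v' k‖ ^ 2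
      ≤ ∑ i, ∑ k, P k i ^ m * ‖Rr k (S' k i) i - v' k‖ ^ 2 :=
        Finset.sum_le_sum fun i _ =>
          (hB i).2.2.2 (fun k => P k i) (fun k => (hP01 k i).1) (hPcol i)
    _ ≤ ∑ i, ∑ k, P k i ^ m * ‖Rr k (S k i) i - v' k‖ ^ 2 :=
        Finset.sum_le_sum fun i _ => Finset.sum_le_sum fun k _ =>
          mul_le_mul_of_nonneg_left
            (pow_le_pow_left₀ (norm_nonneg _) (hS' k i) 2) (hw k i)
    _ = ∑ k, ∑ i, P k i ^ m * ‖Rr k (S k i) i - v' k‖ ^ 2 := Finset.sum_comm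
    _ ≤ ∑ k, ∑ i, P k i ^ m * ‖Rr k (S k i) i - v k‖ ^ 2 := by
        refine Finset.sum_le_sum fun k _ => ?_
        have h := center_opt (fun i => P k i ^ m) (fun i => hw k i)
          (hwpos k).ne' (fun i => Rr k (S k i) i) (v k)
        rw [← hv' k] at h
        exact h
    _ = ∑ i, ∑ k, P k i ^ m * ‖Rr k (S k i) i - v k‖ ^ 2 := Finset.sum_comm
end

section
/- Fix a shift matrix S and centers v_1, …, v_K such that d_{k,i} := ‖x̃_{i,s_{k,i}}|_{(0,c_k)} − v_k‖ > 0 for every i and k, and define P̂ by p̂_{k,i} = [Σ_{l=1}^K (d_{k,i}²/d_{l,i}²)^{1/(m-1)}]^{-1}. Then (P̂, S, v_1, …, v_K) is feasible, and for every feasible (P, S, v_1, …, v_K) with P ≠ P̂ one has J_m(P̂, S, v_1, …, v_K) < J_m(P, S, v_1, …, v_K); that is, P̂ is the unique minimizer of the membership matrix given the shifts and centers, and replacing any other feasible membership matrix by P̂ strictly decreases J_m. -/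
open MeasureTheory Finset

lemma tangent_line_lt {a b : ℝ} (ha : 0 ≤ a) (hb : 0 < b) {m : ℝ} (hm : 1 < m)
    (hab : a ≠ b) :
    b ^ m + m * b ^ (m - 1) * (a - b) < a ^ m := by
  have h0 : 0 ≤ a / b := div_nonneg ha hb.le
  have hs : -1 ≤ a / b - 1 := by linarith
  have hs' : a / b - 1 ≠ 0 := by
    intro h
    exact hab ((div_eq_one_iff_eq hb.ne').1 (by linarith))
  have hB := one_add_mul_self_lt_rpow_one_add hs hs' hm
  have h1 : (1 : ℝ) + (a / b - 1) = a / b := by ring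
  rw [h1] at hB
  have hbm : (0:ℝ) < b ^ m := Real.rpow_pos_of_pos hb m
  have hb1 : b ^ (m - 1) * b = b ^ m := by
    rw [← Real.rpow_add_one hb.ne' (m - 1)]; ring_nf
  have key : b ^ m + m * b ^ (m - 1) * (a - b) = b ^ m * (1 + m * (a / b - 1)) := by
    rw [← hb1]; field_simp
  have hdiv : (a / b) ^ m = a ^ m / b ^ m := Real.div_rpow ha hb.le m
  have h2 : b ^ m * (1 + m * (a / b - 1)) < b ^ m * (a / b) ^ m :=
    (mul_lt_mul_iff_right₀ hbm).2 hB
  rw [key]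
  calc b ^ m * (1 + m * (a / b - 1)) < b ^ m * (a / b) ^ m := h2
    _ = a ^ m := by rw [hdiv]; field_simp

lemma tangent_line_le {a b : ℝ} (ha : 0 ≤ a) (hb : 0 < b) {m : ℝ} (hm : 1 < m) :
    b ^ m + m * b ^ (m - 1) * (a - b) ≤ a ^ m := by
  rcases eq_or_ne a b with rfl | hab
  · simp
  · exact (tangent_line_lt ha hb hm hab).le

lemma col_main (K : ℕ) (hK : 0 < K) (m : ℝ) (hm : 1 < m) (d : Fin K → ℝ)
    (hd : ∀ k, 0 < d k) (Phat : Fin K → ℝ)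
    (hPhat : ∀ k, Phat k = (∑ l, (d k ^ 2 / d l ^ 2) ^ ((1:ℝ)/(m-1)))⁻¹) :
    (∀ k, 0 < Phat k) ∧ (∀ k, Phat k ≤ 1) ∧ (∑ k, Phat k = 1) ∧
    ∀ P : Fin K → ℝ, (∀ k, 0 ≤ P k) → (∑ k, P k = 1) →
      (∑ k, Phat k ^ m * d k ^ 2 ≤ ∑ k, P k ^ m * d k ^ 2) ∧
      (P ≠ Phat → ∑ k, Phat k ^ m * d k ^ 2 < ∑ k, P k ^ m * d k ^ 2) := by
  haveI : Nonempty (Fin K) := Fin.pos_iff_nonempty.1 hK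
  have hm1 : (0:ℝ) < m - 1 := by linarith
  set u : Fin K → ℝ := fun k => (d k ^ 2) ^ ((1:ℝ)/(m-1)) with hu_def
  have hu : ∀ k, 0 < u k := fun k => Real.rpow_pos_of_pos (pow_pos (hd k) 2) _
  set T : ℝ := ∑ l, (u l)⁻¹ with hT_def
  have hT : 0 < T := Finset.sum_pos (fun l _ => inv_pos.2 (hu l)) univ_nonempty
  have hPhat' : ∀ k, Phat k = (u k)⁻¹ * T⁻¹ := by
    intro k
    rw [hPhat k]
    have : ∀ l, (d k ^ 2 / d l ^ 2) ^ ((1:ℝ)/(m-1)) = u k * (u l)⁻¹ := by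
      intro l
      rw [Real.div_rpow (pow_pos (hd k) 2).le (pow_pos (hd l) 2).le]
      rw [div_eq_mul_inv]
    simp_rw [this]
    rw [← Finset.mul_sum, ← hT_def, mul_inv]
  have hpos : ∀ k, 0 < Phat k := by
    intro k; rw [hPhat' k]; exact mul_pos (inv_pos.2 (hu k)) (inv_pos.2 hT)
  have hle1 : ∀ k, Phat k ≤ 1 := by
    intro k
    rw [hPhat k]
    have h1 : (1:ℝ) ≤ ∑ l, (d k ^ 2 / d l ^ 2) ^ ((1:ℝ)/(m-1)) := by
      have := Finset.single_le_sum
        (f := fun l => (d k ^ 2 / d l ^ 2) ^ ((1:ℝ)/(m-1)))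
        (fun l _ => by positivity) (Finset.mem_univ k)
      simpa [div_self (pow_pos (hd k) 2).ne', Real.one_rpow] using this
    exact inv_le_one_of_one_le₀ h1
  have hsum1 : ∑ k, Phat k = 1 := by
    simp_rw [hPhat']
    rw [← Finset.sum_mul, ← hT_def]
    exact mul_inv_cancel₀ hT.ne'
  set lam : ℝ := (T ^ (m-1))⁻¹ with hlam_def
  have hlam : ∀ k, Phat k ^ (m-1) * d k ^ 2 = lam := by
    intro k
    have hd2 : (0:ℝ) < d k ^ 2 := pow_pos (hd k) 2
    rw [hPhat' k, Real.mul_rpow (inv_nonneg.2 (hu k).le) (inv_nonneg.2 hT.le)]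
    have huk : (u k)⁻¹ ^ (m-1) = (d k ^ 2)⁻¹ := by
      rw [Real.inv_rpow (hu k).le]
      congr 1
      show ((d k ^ 2) ^ ((1:ℝ)/(m-1))) ^ (m-1) = d k ^ 2
      rw [← Real.rpow_mul hd2.le]
      have h1 : (1:ℝ)/(m-1) * (m-1) = 1 := by field_simp
      rw [h1, Real.rpow_one]
    have hTk : T⁻¹ ^ (m-1) = lam := by rw [Real.inv_rpow hT.le, hlam_def]
    rw [huk, hTk]
    field_simp
    exact mul_div_cancel_left₀ lam (hd k).ne'
  refine ⟨hpos, hle1, hsum1, ?_⟩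
  intro P hP0 hP1
  set f : Fin K → ℝ :=
    fun k => (Phat k ^ m + m * Phat k ^ (m-1) * (P k - Phat k)) * d k ^ 2 with hf_def
  have hf_eq : ∀ k, f k = Phat k ^ m * d k ^ 2 + m * lam * (P k - Phat k) := by
    intro k
    have := hlam k
    simp only [hf_def]
    linear_combination (m * (P k - Phat k)) * this
  have hsumf : ∑ k, f k = ∑ k, Phat k ^ m * d k ^ 2 := by
    simp_rw [hf_eq]
    rw [Finset.sum_add_distrib, ← Finset.mul_sum, Finset.sum_sub_distrib, hP1, hsum1]
    ring
  have hfle : ∀ k, f k ≤ P k ^ m * d k ^ 2 := by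
    intro k
    exact mul_le_mul_of_nonneg_right (tangent_line_le (hP0 k) (hpos k) hm)
      (pow_pos (hd k) 2).le
  constructor
  · rw [← hsumf]
    exact Finset.sum_le_sum fun k _ => hfle k
  · intro hne
    obtain ⟨k0, hk0⟩ := Function.ne_iff.1 hne
    have hflt : f k0 < P k0 ^ m * d k0 ^ 2 := by
      exact mul_lt_mul_of_pos_right (tangent_line_lt (hP0 k0) (hpos k0) hm hk0)
        (pow_pos (hd k0) 2)
    rw [← hsumf]
    exact Finset.sum_lt_sum (fun k _ => hfle k) ⟨k0, Finset.mem_univ k0, hflt⟩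

/-- Given shifts `S` and centers `v` with all distances
`d_{k,i} = ‖x̃_{i,s_{k,i}}|_{(0,c_k)} − v_k‖ > 0`, the membership matrix `P̂` defined by
the explicit formula is feasible and is the unique minimizer of `J_m(·, S, v)` over
feasible membership matrices: for every feasible `P ≠ P̂`,
`J_m(P̂,S,v) < J_m(P,S,v)`. Here `Rr k s i ∈ L²((0,c_k), ℝ^d)` denotes the restriction
to `(0,c_k)` of the shifted curve `t ↦ x_i(t+s)`. -/
theorem probKMA_membership_update_unique_minimizer
    (N K d : ℕ) (hN : 1 ≤ N) (hK : 1 ≤ K) (hd : 1 ≤ d) (m : ℝ) (hm : 1 < m)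
    (x : Fin N → Lp (EuclideanSpace ℝ (Fin d)) 2 (volume : Measure ℝ))
    (c : Fin K → ℝ) (hc : ∀ k, 0 < c k)
    (Rr : (k : Fin K) → ℝ → Fin N →
      Lp (EuclideanSpace ℝ (Fin d)) 2 (volume.restrict (Set.Ioo (0 : ℝ) (c k))))
    (hRr : ∀ k s i, ⇑(Rr k s i) =ᵐ[volume.restrict (Set.Ioo (0 : ℝ) (c k))]
      fun t => x i (t + s))
    (S : Fin K → Fin N → ℝ)
    (v : (k : Fin K) →
      Lp (EuclideanSpace ℝ (Fin d)) 2 (volume.restrict (Set.Ioo (0 : ℝ) (c k))))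
    (hdpos : ∀ k i, 0 < ‖Rr k (S k i) i - v k‖)
    (Phat : Fin K → Fin N → ℝ)
    (hPhat : ∀ k i, Phat k i =
      (∑ l, (‖Rr k (S k i) i - v k‖ ^ 2 / ‖Rr l (S l i) i - v l‖ ^ 2) ^
        ((1 : ℝ) / (m - 1)))⁻¹) :
    ((∀ k i, Phat k i ∈ Set.Icc (0 : ℝ) 1) ∧ (∀ i, ∑ k, Phat k i = 1) ∧
        (∀ k, 0 < ∑ i, Phat k i)) ∧
      ∀ P : Fin K → Fin N → ℝ,
        ((∀ k i, P k i ∈ Set.Icc (0 : ℝ) 1) ∧ (∀ i, ∑ k, P k i = 1) ∧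
          (∀ k, 0 < ∑ i, P k i)) → P ≠ Phat →
        (∑ i, ∑ k, Phat k i ^ m * ‖Rr k (S k i) i - v k‖ ^ 2) <
          ∑ i, ∑ k, P k i ^ m * ‖Rr k (S k i) i - v k‖ ^ 2 := by
  haveI : Nonempty (Fin N) := Fin.pos_iff_nonempty.1 hN
  have hcol := fun i : Fin N =>
    col_main K hK m hm (fun k => ‖Rr k (S k i) i - v k‖) (fun k => hdpos k i)
      (fun k => Phat k i) (fun k => hPhat k i)
  refine ⟨⟨fun k i => ⟨((hcol i).1 k).le, (hcol i).2.1 k⟩,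
    fun i => (hcol i).2.2.1,
    fun k => Finset.sum_pos (fun i _ => (hcol i).1 k) Finset.univ_nonempty⟩, ?_⟩
  rintro P ⟨hPmem, hPsum, -⟩ hne
  have hcolP := fun i : Fin N =>
    (hcol i).2.2.2 (fun k => P k i) (fun k => (hPmem k i).1) (hPsum i)
  obtain ⟨i0, hi0⟩ : ∃ i, (fun k => P k i) ≠ fun k => Phat k i := by
    by_contra h
    push_neg at h
    exact hne (funext fun k => funext fun i => congrFun (h i) k)
  exact Finset.sum_lt_sum (fun i _ => (hcolP i).1)
    ⟨i0, Finset.mem_univ i0, (hcolP i0).2 hi0⟩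
end
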